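/- If φ is a Schwartz function on ℝⁿ and G is an off-diagonal Schwartz function on ℝ²ⁿ (i.e., G ∈ 𝒮(ℝ²ⁿ), G(x,y) = -G(y,x), and all partial derivatives ∂_x^α ∂_y^β G vanish on the diagonal {x = y}), then the function (φ ∗ G)(x,y) := ∫_{ℝⁿ} φ(z) G(x−z, y−z) dz is again an off-diagonal Schwartz function on ℝ²ⁿ. -/

import Mathlib

set_option maxHeartbeats 1600000
set_option synthInstance.maxHeartbeats 400000

open MeasureTheory SchwartzMap

noncomputable abbrev Euc (n : ℕ) : Type := EuclideanSpace ℝ (Fin n)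

/-- `G` is an off-diagonal Schwartz function: antisymmetric and all derivatives
vanish on the diagonal. -/
def IsOffDiag {n : ℕ} (G : SchwartzMap (Euc n × Euc n) ℝ) : Prop :=
  (∀ x y : Euc n, G (x, y) = - G (y, x)) ∧
  (∀ (k : ℕ) (z : Euc n), iteratedFDeriv ℝ k (⇑G) (z, z) = 0)

section Aux

variable {n : ℕ} (φ : SchwartzMap (Euc n) ℝ) (G : SchwartzMap (Euc n × Euc n) ℝ)

/-- The convolution in the diagonal direction. -/
noncomputable def convAux : (Euc n × Euc n) → ℝ :=
  fun p => ∫ z : Euc n, φ z • G (p - (z, z))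

lemma contIter (m : ℕ) : Continuous (iteratedFDeriv ℝ m (⇑G)) :=
  (contDiff_iff_continuous_differentiable.mp (G.smooth ⊤)).1 m le_top

lemma diffIter (m : ℕ) : Differentiable ℝ (iteratedFDeriv ℝ m (⇑G)) :=
  (contDiff_iff_continuous_differentiable.mp (G.smooth ⊤)).2 m (by simp)

/-- sup bound on iterated derivatives of a Schwartz function. -/
lemma gBound (m : ℕ) : ∃ C : ℝ, 0 ≤ C ∧ ∀ q, ‖iteratedFDeriv ℝ m (⇑G) q‖ ≤ C := by
  obtain ⟨C, hC⟩ := G.decay' 0 m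
  refine ⟨C, le_trans (norm_nonneg _) (by simpa using hC 0), fun q => by have h := hC q; simp at h; exact h⟩

lemma normFderivIter (m : ℕ) (q : Euc n × Euc n) :
    ‖fderiv ℝ (iteratedFDeriv ℝ m (⇑G)) q‖ = ‖iteratedFDeriv ℝ (m + 1) (⇑G) q‖ := by
  rw [fderiv_iteratedFDeriv]
  simp
  exact LinearIsometryEquiv.norm_map _ _

lemma contFderivIter (m : ℕ) : Continuous (fderiv ℝ (iteratedFDeriv ℝ m (⇑G))) := by
  rw [fderiv_iteratedFDeriv]
  exact (LinearIsometryEquiv.continuous _).comp (contIter G (m + 1))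

lemma integrableAux {Y : Type*} [NormedAddCommGroup Y] [NormedSpace ℝ Y]
    (b : (Euc n × Euc n) → Y) (hb : Continuous b) {C : ℝ}
    (hC : ∀ q, ‖b q‖ ≤ C) (p : Euc n × Euc n) :
    Integrable (fun z : Euc n => φ z • b (p - (z, z))) volume := by
  have hcont : Continuous fun z : Euc n => φ z • b (p - (z, z)) :=
    φ.continuous.smul (hb.comp (continuous_const.sub (continuous_id.prodMk continuous_id)))
  refine Integrable.mono' (g := fun z => ‖φ z‖ * C) (φ.integrable.norm.mul_const C)
    hcont.aestronglyMeasurable (Filter.Eventually.of_forall fun z => ?_)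
  rw [norm_smul]
  exact mul_le_mul_of_nonneg_left (hC _) (norm_nonneg _)

lemma hasFDerivAux (m : ℕ) (p : Euc n × Euc n) :
    HasFDerivAt (fun q => ∫ z : Euc n, φ z • iteratedFDeriv ℝ m (⇑G) (q - (z, z)))
      (∫ z : Euc n, φ z • fderiv ℝ (iteratedFDeriv ℝ m (⇑G)) (p - (z, z))) p := by
  obtain ⟨C, hC0, hC⟩ := gBound G m
  obtain ⟨C', hC'0, hC'⟩ := gBound G (m + 1)
  have hdiff : ∀ (z : Euc n) (x : Euc n × Euc n),
      HasFDerivAt (fun q : Euc n × Euc n => iteratedFDeriv ℝ m (⇑G) (q - (z, z)))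
        (fderiv ℝ (iteratedFDeriv ℝ m (⇑G)) (x - (z, z))) x := by
    intro z x
    have h1 : HasFDerivAt (fun q : Euc n × Euc n => q - (z, z))
        (ContinuousLinearMap.id ℝ (Euc n × Euc n)) x := (hasFDerivAt_id x).sub_const _
    have h2 : HasFDerivAt (iteratedFDeriv ℝ m (⇑G))
        (fderiv ℝ (iteratedFDeriv ℝ m (⇑G)) (x - (z, z))) (x - (z, z)) :=
      (diffIter G m (x - (z, z))).hasFDerivAt
    have h3 := h2.comp x h1; rw [ContinuousLinearMap.comp_id] at h3; exact h3
  refine hasFDerivAt_integral_of_dominated_of_fderiv_le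
    (F := fun (x : Euc n × Euc n) (z : Euc n) => φ z • iteratedFDeriv ℝ m (⇑G) (x - (z, z)))
    (F' := fun (x : Euc n × Euc n) (z : Euc n) =>
      φ z • fderiv ℝ (iteratedFDeriv ℝ m (⇑G)) (x - (z, z)))
    (bound := fun z => ‖φ z‖ * C') (Metric.ball_mem_nhds p one_pos) ?_ ?_ ?_ ?_ ?_ ?_
  · refine Filter.Eventually.of_forall fun x => ?_
    exact (φ.continuous.smul ((contIter G m).comp
      (continuous_const.sub (continuous_id.prodMk continuous_id)))).aestronglyMeasurable
  · exact integrableAux φ _ (contIter G m) hC p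
  · haveI : TopologicalSpace.PseudoMetrizableSpace
        (Euc n × Euc n →L[ℝ] Euc n × Euc n [×m]→L[ℝ] ℝ) :=
      @PseudoEMetricSpace.pseudoMetrizableSpace
        (Euc n × Euc n →L[ℝ] Euc n × Euc n [×m]→L[ℝ] ℝ) _
    exact (φ.continuous.smul ((contFderivIter G m).comp
      (continuous_const.sub (continuous_id.prodMk continuous_id)))).aestronglyMeasurable
  · refine Filter.Eventually.of_forall fun z => fun x _ => ?_
    show ‖φ z • fderiv ℝ (iteratedFDeriv ℝ m (⇑G)) (x - (z, z))‖ ≤ ‖φ z‖ * C'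
    refine le_trans (ContinuousLinearMap.opNorm_smul_le (φ z)
      (fderiv ℝ (iteratedFDeriv ℝ m (⇑G)) (x - (z, z))))
      (mul_le_mul_of_nonneg_left ?_ (norm_nonneg _))
    rw [normFderivIter]
    exact hC' _
  · exact φ.integrable.norm.mul_const C'
  · exact Filter.Eventually.of_forall fun z => fun x _ => (hdiff z x).const_smul (φ z)

lemma iterEq (m : ℕ) :
    iteratedFDeriv ℝ m (convAux φ G) =
      fun p => ∫ z : Euc n, φ z • iteratedFDeriv ℝ m (⇑G) (p - (z, z)) := by
  induction m with
  | zero =>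
    funext p
    have h1 : ∀ z : Euc n, φ z • iteratedFDeriv ℝ 0 (⇑G) (p - (z, z)) =
        (continuousMultilinearCurryFin0 ℝ (Euc n × Euc n) ℝ).symm.toLinearIsometry
          (φ z • G (p - (z, z))) := by
      intro z
      rw [iteratedFDeriv_zero_eq_comp]
      simp only [Function.comp_apply, LinearIsometryEquiv.coe_toLinearIsometry]
      exact (map_smul _ _ _).symm
    simp only [h1]
    rw [LinearIsometry.integral_comp_comm
      (continuousMultilinearCurryFin0 ℝ (Euc n × Euc n) ℝ).symm.toLinearIsometry
      (fun z : Euc n => φ z • G (p - (z, z)))]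
    rw [iteratedFDeriv_zero_eq_comp]
    rfl
  | succ m ih =>
    funext p
    have hfd : fderiv ℝ (iteratedFDeriv ℝ m (convAux φ G)) p =
        ∫ z : Euc n, φ z • fderiv ℝ (iteratedFDeriv ℝ m (⇑G)) (p - (z, z)) := by
      rw [ih]
      exact (hasFDerivAux φ G m p).fderiv
    have h1 : ∀ z : Euc n, φ z • iteratedFDeriv ℝ (m + 1) (⇑G) (p - (z, z)) =
        (continuousMultilinearCurryLeftEquiv ℝ
          (fun _ : Fin (m + 1) => Euc n × Euc n) ℝ).symm.toLinearIsometry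
          (φ z • fderiv ℝ (iteratedFDeriv ℝ m (⇑G)) (p - (z, z))) := by
      intro z
      rw [iteratedFDeriv_succ_eq_comp_left]
      simp
    simp only [h1]
    rw [LinearIsometry.integral_comp_comm (𝕜 := ℝ)
      (continuousMultilinearCurryLeftEquiv ℝ
        (fun _ : Fin (m + 1) => Euc n × Euc n) ℝ).symm.toLinearIsometry
      (fun z : Euc n => φ z • fderiv ℝ (iteratedFDeriv ℝ m (⇑G)) (p - (z, z)))]
    rw [← hfd, iteratedFDeriv_succ_eq_comp_left]
    rfl

lemma convSmooth : ContDiff ℝ ((⊤ : ℕ∞)) (convAux φ G) := by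
  refine contDiff_of_differentiable_iteratedFDeriv fun m _ => ?_
  rw [iterEq]
  exact fun p => (hasFDerivAux φ G m p).differentiableAt

lemma convDecay (k m : ℕ) :
    ∃ C : ℝ, ∀ p, ‖p‖ ^ k * ‖iteratedFDeriv ℝ m (convAux φ G) p‖ ≤ C := by
  obtain ⟨C0, hC00, hC0⟩ := gBound G m
  obtain ⟨C1, hC1⟩ := G.decay' k m
  refine ⟨∫ z : Euc n, (2 : ℝ) ^ k * (‖φ z‖ * C1 + (‖z‖ ^ k * ‖φ z‖) * C0), fun p => ?_⟩
  rw [iterEq]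
  have hint : Integrable (fun z : Euc n => φ z • iteratedFDeriv ℝ m (⇑G) (p - (z, z))) volume :=
    integrableAux φ _ (contIter G m) hC0 p
  have h1 : ‖∫ z : Euc n, φ z • iteratedFDeriv ℝ m (⇑G) (p - (z, z))‖ ≤
      ∫ z : Euc n, ‖φ z • iteratedFDeriv ℝ m (⇑G) (p - (z, z))‖ :=
    norm_integral_le_integral_norm _
  have h2 : ‖p‖ ^ k * ‖∫ z : Euc n, φ z • iteratedFDeriv ℝ m (⇑G) (p - (z, z))‖ ≤
      ∫ z : Euc n, ‖p‖ ^ k * ‖φ z • iteratedFDeriv ℝ m (⇑G) (p - (z, z))‖ := by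
    rw [integral_const_mul]
    exact mul_le_mul_of_nonneg_left h1 (by positivity)
  refine h2.trans (integral_mono (hint.norm.const_mul _) ?_ fun z => ?_)
  · refine Integrable.const_mul ?_ _
    exact (φ.integrable.norm.mul_const C1).add
      ((φ.integrable_pow_mul volume k).mul_const C0)
  · -- pointwise bound
    have hzz : ‖((z, z) : Euc n × Euc n)‖ = ‖z‖ := by
      simp [Prod.norm_def]
    have hp : ‖p‖ ≤ ‖p - (z, z)‖ + ‖z‖ := by
      calc ‖p‖ = ‖p - (z, z) + (z, z)‖ := by rw [sub_add_cancel]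
        _ ≤ ‖p - (z, z)‖ + ‖((z, z) : Euc n × Euc n)‖ := norm_add_le _ _
        _ = ‖p - (z, z)‖ + ‖z‖ := by rw [hzz]
    have hpk : ‖p‖ ^ k ≤ 2 ^ k * (‖p - (z, z)‖ ^ k + ‖z‖ ^ k) := by
      calc ‖p‖ ^ k ≤ (‖p - (z, z)‖ + ‖z‖) ^ k :=
            pow_le_pow_left₀ (norm_nonneg _) hp k
        _ ≤ (2 * max ‖p - (z, z)‖ ‖z‖) ^ k := by
            refine pow_le_pow_left₀ (by positivity) ?_ k
            rw [two_mul]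
            exact add_le_add (le_max_left _ _) (le_max_right _ _)
        _ = 2 ^ k * max ‖p - (z, z)‖ ‖z‖ ^ k := by rw [mul_pow]
        _ ≤ 2 ^ k * (‖p - (z, z)‖ ^ k + ‖z‖ ^ k) := by
            refine mul_le_mul_of_nonneg_left ?_ (by positivity)
            rcases max_cases ‖p - (z, z)‖ ‖z‖ with ⟨h, _⟩ | ⟨h, _⟩ <;> rw [h]
            · exact le_add_of_nonneg_right (by positivity)
            · exact le_add_of_nonneg_left (by positivity)
    rw [norm_smul (φ z) (iteratedFDeriv ℝ m (⇑G) (p - (z, z)))]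
    calc ‖p‖ ^ k * (‖φ z‖ * ‖iteratedFDeriv ℝ m (⇑G) (p - (z, z))‖) ≤
        (2 ^ k * (‖p - (z, z)‖ ^ k + ‖z‖ ^ k)) *
          (‖φ z‖ * ‖iteratedFDeriv ℝ m (⇑G) (p - (z, z))‖) := by
          exact mul_le_mul_of_nonneg_right hpk (by positivity)
      _ = 2 ^ k * (‖φ z‖ * (‖p - (z, z)‖ ^ k * ‖iteratedFDeriv ℝ m (⇑G) (p - (z, z))‖) +
          (‖z‖ ^ k * ‖φ z‖) * ‖iteratedFDeriv ℝ m (⇑G) (p - (z, z))‖) := by ring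
      _ ≤ 2 ^ k * (‖φ z‖ * C1 + (‖z‖ ^ k * ‖φ z‖) * C0) := by
          refine mul_le_mul_of_nonneg_left (add_le_add ?_ ?_) (by positivity)
          · exact mul_le_mul_of_nonneg_left (hC1 _) (norm_nonneg _)
          · exact mul_le_mul_of_nonneg_left (hC0 _) (by positivity)

/-- The convolution as a Schwartz map. -/
noncomputable def convSchwartz : SchwartzMap (Euc n × Euc n) ℝ :=
  ⟨convAux φ G, convSmooth φ G, convDecay φ G⟩

lemma convSchwartz_apply (p : Euc n × Euc n) :
    convSchwartz φ G p = ∫ z : Euc n, φ z • G (p - (z, z)) := rfl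

lemma convSchwartz_iter (m : ℕ) :
    iteratedFDeriv ℝ m (⇑(convSchwartz φ G)) =
      fun p => ∫ z : Euc n, φ z • iteratedFDeriv ℝ m (⇑G) (p - (z, z)) :=
  iterEq φ G m

end Aux

theorem convolution_of_offDiag_is_offDiag {n : ℕ}
    (φ : SchwartzMap (Euc n) ℝ) (G : SchwartzMap (Euc n × Euc n) ℝ)
    (hG : IsOffDiag G) :
    ∃ H : SchwartzMap (Euc n × Euc n) ℝ, IsOffDiag H ∧
      ∀ x y : Euc n, H (x, y) = ∫ z : Euc n, φ z * G (x - z, y - z) := by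
  refine ⟨convSchwartz φ G, ⟨?_, ?_⟩, ?_⟩
  · intro x y
    rw [convSchwartz_apply, convSchwartz_apply, ← integral_neg]
    refine integral_congr_ae (Filter.Eventually.of_forall fun z => ?_)
    show φ z • G (x - z, y - z) = -(φ z • G (y - z, x - z))
    rw [hG.1 (x - z) (y - z), smul_neg]
  · intro k z
    rw [convSchwartz_iter]
    show (∫ w : Euc n, φ w • iteratedFDeriv ℝ k (⇑G) ((z, z) - (w, w))) = 0
    have h : ∀ w : Euc n, φ w • iteratedFDeriv ℝ k (⇑G) ((z, z) - (w, w)) = 0 := by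
      intro w
      show φ w • iteratedFDeriv ℝ k (⇑G) (z - w, z - w) = 0
      rw [hG.2 k (z - w), smul_zero]
    simp only [h, integral_zero]
  · intro x y
    rw [convSchwartz_apply]
    refine integral_congr_ae (Filter.Eventually.of_forall fun z => ?_)
    show φ z • G (x - z, y - z) = φ z * G (x - z, y - z)
    rw [smul_eq_mul]
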